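/- Suppose f and (f_j)_{j≥1} are sequences ℕ → ℝ such that f_j → f pointwise as j → ∞. Then, in [0,∞], ‖f‖_𝔹 ≤ liminf_{j→∞} (6·‖f_j‖_{1,∞} + ‖f_j‖_𝔹). -/

import Mathlib

open Filter ENNReal
open scoped Classical

noncomputable section

/-- Coordinate projection onto a finite set of indices. -/
def proj (A : Finset ℕ) (f : ℕ → ℝ) : ℕ → ℝ := fun n => if n ∈ A then f n else 0

/-- Coordinate projection onto a set of indices. -/
def projSet (A : Set ℕ) (f : ℕ → ℝ) : ℕ → ℝ := fun n => if n ∈ A then f n else 0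

/-- `𝟙*_A(f) = ∑_{n ∈ A} f n`. -/
def oneStar (f : ℕ → ℝ) (A : Finset ℕ) : ℝ := ∑ n ∈ A, f n

/-- `A` is a greedy set of `f`. -/
def GreedySet (f : ℕ → ℝ) (A : Finset ℕ) : Prop :=
  ∀ n ∈ A, ∀ k, k ∉ A → |f k| ≤ |f n|

/-- `β(f,A) = sup_{I ∈ ℐ} |𝟙*_{I∖A}(f)| ∈ [0,∞]`, the sup running over all finite
integer intervals `I = [a,b]`. -/
def beta (f : ℕ → ℝ) (A : Finset ℕ) : ℝ≥0∞ :=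
  ⨆ a : ℕ, ⨆ b : ℕ, ENNReal.ofReal |oneStar f (Finset.Icc a b \ A)|

/-- `‖f‖_𝔹 = sup_{A ∈ 𝒢(f)} β(f,A) ∈ [0,∞]`. -/
def BNorm (f : ℕ → ℝ) : ℝ≥0∞ :=
  ⨆ A ∈ {A : Finset ℕ | GreedySet f A}, beta f A

/-- Membership in `𝔹`, i.e. `‖f‖_𝔹 < ∞`. -/
def MemB (f : ℕ → ℝ) : Prop := BNorm f < ⊤

/-- Membership in `c₀`. -/
def Memc0 (f : ℕ → ℝ) : Prop := Tendsto f atTop (nhds 0)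

/-- Membership in `𝔹₀`. -/
def MemB0 (f : ℕ → ℝ) : Prop :=
  Memc0 f ∧ ∀ ε : ℝ, 0 < ε → ∃ A : Finset ℕ, GreedySet f A ∧
    ∀ B : Finset ℕ, GreedySet f B → A ⊆ B → beta f B < ENNReal.ofReal ε

/-- The net `(𝟙*_A(f))_{A ∈ 𝒢(f)}`, directed by inclusion, converges to `s`. -/
def GreedyLim (f : ℕ → ℝ) (s : ℝ) : Prop :=
  ∀ ε : ℝ, 0 < ε → ∃ A : Finset ℕ, GreedySet f A ∧
    ∀ B : Finset ℕ, GreedySet f B → A ⊆ B → |oneStar f B - s| < ε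

/-- Membership in `𝔸`. -/
def MemA (f : ℕ → ℝ) : Prop := Memc0 f ∧ ∃ s, GreedyLim f s

/-- `σ_g(f)`, the greedy sum of `f` (junk value `0` if the greedy net does not converge). -/
def sigmaG (f : ℕ → ℝ) : ℝ := if h : ∃ s, GreedyLim f s then h.choose else 0

/-- `‖f‖_𝔸 = sup_{A ∈ 𝒢(f)} |σ_g(f) - 𝟙*_A(f)|`. -/
def ANorm (f : ℕ → ℝ) : ℝ≥0∞ :=
  ⨆ A ∈ {A : Finset ℕ | GreedySet f A}, ENNReal.ofReal |sigmaG f - oneStar f A|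

/-- The series `∑_n f n` converges (in the ordered sense) to `s`. -/
def SeriesLim (f : ℕ → ℝ) (s : ℝ) : Prop :=
  Tendsto (fun m => ∑ n ∈ Finset.range m, f n) atTop (nhds s)

/-- Membership in `𝒔`: the series `∑_n f n` converges. -/
def MemSeries (f : ℕ → ℝ) : Prop := ∃ s, SeriesLim f s

/-- `σ_s(f) = ∑_{n=0}^∞ f n` (junk value `0` if the series does not converge). -/
def sigmaS (f : ℕ → ℝ) : ℝ := if h : ∃ s, SeriesLim f s then h.choose else 0

/-- `‖f‖_𝒔 = sup_m |∑_{n = m}^∞ f n|`, expressed via `σ_s(f)` minus partial sums. -/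
def sNorm (f : ℕ → ℝ) : ℝ≥0∞ :=
  ⨆ m : ℕ, ENNReal.ofReal |sigmaS f - ∑ n ∈ Finset.range m, f n|

/-- `D(f)(m)`: the `m`-th term (for `m ≥ 1`) of the nonincreasing rearrangement of `|f|`,
as an element of `[0,∞]`. -/
def Drearr (f : ℕ → ℝ) (m : ℕ) : ℝ≥0∞ :=
  sInf {t : ℝ≥0∞ | {n : ℕ | t < ENNReal.ofReal |f n|}.Finite ∧
    {n : ℕ | t < ENNReal.ofReal |f n|}.ncard < m}

/-- `ρ_{1,∞}(f,k) = sup_{m ≥ 1} m · D(f)(m+k) ∈ [0,∞]`. Note `ρ_{1,∞}(f,0) = ‖f‖_{1,∞}`. -/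
def rho (f : ℕ → ℝ) (k : ℕ) : ℝ≥0∞ :=
  ⨆ m : ℕ, ⨆ _ : 1 ≤ m, (m : ℝ≥0∞) * Drearr f (m + k)

/-- Membership in `h_{1,∞}`: `lim_m m · D(f)(m) = 0`. -/
def Memh1inf (f : ℕ → ℝ) : Prop :=
  Tendsto (fun m : ℕ => (m : ℝ≥0∞) * Drearr f m) atTop (nhds 0)

/-- A sequence of nonempty finite integer intervals which is right-dominant:
`max J_k < min J_{k+1}` for all `k`. -/
def RightDominant (J : ℕ → Finset ℕ) : Prop :=
  (∀ k : ℕ, ∃ a b : ℕ, a ≤ b ∧ J k = Finset.Icc a b) ∧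
  ∀ k : ℕ, ∀ n ∈ J k, ∀ m ∈ J (k + 1), n < m

/-- `g` is Leibnizian with admissible sequence `J`. -/
def Admissible (g : ℕ → ℝ) (J : ℕ → Finset ℕ) : Prop :=
  RightDominant J ∧
  (∀ n : ℕ, g n ≠ 0 → ∃ k, n ∈ J k) ∧
  (∀ k : ℕ, oneStar g (J (k + 1)) ≤ oneStar g (J k)) ∧
  (∀ k : ℕ, ∀ n ∈ J k, g n ≠ 0 → ∀ m ∈ J (k + 1), g m < g n)

end

private lemma ofReal_oneStar_le_beta (g : ℕ → ℝ) (A : Finset ℕ) (a b : ℕ) :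
    ENNReal.ofReal |oneStar g (Finset.Icc a b \ A)| ≤ beta g A :=
  le_iSup₂ (f := fun a b => ENNReal.ofReal |oneStar g (Finset.Icc a b \ A)|) a b

private lemma beta_le_BNorm {g : ℕ → ℝ} {A : Finset ℕ} (hA : GreedySet g A) :
    beta g A ≤ BNorm g :=
  le_iSup₂ (f := fun A (_ : GreedySet g A) => beta g A) A hA

private lemma mul_Drearr_le_rho {g : ℕ → ℝ} {m : ℕ} (hm : 1 ≤ m) :
    (m : ℝ≥0∞) * Drearr g m ≤ rho g 0 := by
  have : (m : ℝ≥0∞) * Drearr g (m + 0) ≤ rho g 0 :=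
    le_iSup₂ (f := fun (m : ℕ) (_ : 1 ≤ m) => (m : ℝ≥0∞) * Drearr g (m + 0)) m hm
  simpa using this

private lemma key (g : ℕ → ℝ) (A : Finset ℕ) (a b : ℕ) (ε : ℝ) (hε : 0 < ε)
    (hAI : ∀ k ∈ Finset.Icc a b, k ∉ A → ∀ n ∈ A ∩ Finset.Icc a b, |g k| ≤ |g n| + 2 * ε) :
    ENNReal.ofReal |oneStar g (Finset.Icc a b \ A)| ≤
      6 * rho g 0 + BNorm g + ENNReal.ofReal (2 * (A ∩ Finset.Icc a b).card * ε) := by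
  set I := Finset.Icc a b with hIdef
  rcases (A ∩ I).eq_empty_or_nonempty with h0 | hne
  · -- A ∩ I = ∅ : use the empty greedy set
    have hIA : I \ A = I \ (∅ : Finset ℕ) := by
      ext n
      simp only [Finset.mem_sdiff, Finset.notMem_empty, not_false_iff, and_true]
      refine ⟨fun hn => hn.1, fun hn => ⟨hn, fun hnA => ?_⟩⟩
      exact absurd (Finset.mem_inter.2 ⟨hnA, hn⟩) (by simp [h0])
    have hB0 : GreedySet g ∅ := fun n hn => absurd hn (Finset.notMem_empty n)
    calc ENNReal.ofReal |oneStar g (I \ A)|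
        = ENNReal.ofReal |oneStar g (I \ (∅ : Finset ℕ))| := by rw [hIA]
      _ ≤ beta g ∅ := ofReal_oneStar_le_beta g ∅ a b
      _ ≤ BNorm g := beta_le_BNorm hB0
      _ ≤ 6 * rho g 0 + BNorm g + ENNReal.ofReal (2 * (A ∩ I).card * ε) := by
          rw [add_comm (6 * rho g 0), add_assoc]; exact le_add_right le_rfl
  · obtain ⟨n₀, hn₀, ht⟩ := Finset.exists_mem_eq_inf' hne (fun n => |g n|)
    set t := (A ∩ I).inf' hne (fun n => |g n|) with htdef
    have ht0 : 0 ≤ t := ht ▸ abs_nonneg _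
    set p := (A ∩ I).card with hpdef
    have hp : 1 ≤ p := Finset.card_pos.2 hne
    by_cases hfin : {n : ℕ | t + 2 * ε < |g n|}.Finite
    · set B := hfin.toFinset with hBdef
      have hBmem : ∀ n, n ∈ B ↔ t + 2 * ε < |g n| := by
        intro n; simp [hBdef, Set.Finite.mem_toFinset]
      have hBg : GreedySet g B := by
        intro n hn k hk
        have h1 : |g k| ≤ t + 2 * ε := not_lt.1 (fun hc => hk ((hBmem k).2 hc))
        exact h1.trans ((hBmem n).1 hn).le
      have hIB : ∀ n ∈ I, n ∈ B → n ∈ A := by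
        intro n hnI hnB
        by_contra hnA
        have h1 := hAI n hnI hnA n₀ hn₀
        have h2 := (hBmem n).1 hnB
        rw [← ht] at h1
        linarith
      have hsplit : (I \ B).filter (fun n => n ∉ A) = I \ A := by
        ext n
        simp only [Finset.mem_filter, Finset.mem_sdiff]
        refine ⟨fun hn => ⟨hn.1.1, hn.2⟩, fun hn => ⟨⟨hn.1, fun hnB => hn.2 (hIB n hn.1 hnB)⟩, hn.2⟩⟩
      set S := (I \ B).filter (fun n => n ∈ A) with hSdef
      have hsum : oneStar g (I \ A) = oneStar g (I \ B) - oneStar g S := by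
        have := Finset.sum_filter_add_sum_filter_not (I \ B) (fun n => n ∈ A) g
        rw [hsplit] at this
        simp only [oneStar, hSdef]
        linarith
      have hS_sub : S ⊆ A ∩ I := by
        intro n hn
        simp only [hSdef, Finset.mem_filter, Finset.mem_sdiff] at hn
        exact Finset.mem_inter.2 ⟨hn.2, hn.1.1⟩
      have hS_bound : |oneStar g S| ≤ p * t + 2 * p * ε := by
        have h1 : |oneStar g S| ≤ ∑ n ∈ S, |g n| := Finset.abs_sum_le_sum_abs _ _
        have h2 : ∑ n ∈ S, |g n| ≤ ∑ n ∈ S, (t + 2 * ε) := by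
          refine Finset.sum_le_sum fun n hn => ?_
          have hnB : n ∉ B := by
            simp only [hSdef, Finset.mem_filter, Finset.mem_sdiff] at hn
            exact hn.1.2
          exact not_lt.1 (fun hc => hnB ((hBmem n).2 hc))
        have h3 : ∑ n ∈ S, (t + 2 * ε) = (S.card : ℝ) * (t + 2 * ε) := by
          rw [Finset.sum_const, nsmul_eq_mul]
        have h4 : (S.card : ℝ) ≤ p := by
          exact_mod_cast Finset.card_le_card hS_sub
        nlinarith [Finset.card_le_card hS_sub, abs_nonneg (oneStar g S)]
      have habs : |oneStar g (I \ A)| ≤ |oneStar g (I \ B)| + (p * t + 2 * p * ε) := by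
        rw [hsum]
        calc |oneStar g (I \ B) - oneStar g S|
            ≤ |oneStar g (I \ B)| + |oneStar g S| := abs_sub _ _
          _ ≤ _ := by linarith
      have hDp : ENNReal.ofReal t ≤ Drearr g p := by
        refine le_sInf ?_
        rintro s ⟨hsf, hsc⟩
        by_contra hlt
        push_neg at hlt
        have hsub : (↑(A ∩ I) : Set ℕ) ⊆ {n | s < ENNReal.ofReal |g n|} := by
          intro n hn
          have hn' : n ∈ A ∩ I := hn
          have : t ≤ |g n| := Finset.inf'_le _ hn'
          exact hlt.trans_le (ENNReal.ofReal_le_ofReal this)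
        have hc := Set.ncard_le_ncard hsub hsf
        rw [Set.ncard_coe_finset] at hc
        omega
      have h2 : ENNReal.ofReal (p * t) ≤ 6 * rho g 0 := by
        calc ENNReal.ofReal (p * t) = (p : ℝ≥0∞) * ENNReal.ofReal t := by
              rw [ENNReal.ofReal_mul (by positivity), ENNReal.ofReal_natCast]
          _ ≤ (p : ℝ≥0∞) * Drearr g p := mul_le_mul_right hDp _
          _ ≤ rho g 0 := mul_Drearr_le_rho hp
          _ ≤ 6 * rho g 0 := le_mul_of_one_le_left zero_le (by norm_num)
      calc ENNReal.ofReal |oneStar g (I \ A)|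
          ≤ ENNReal.ofReal (|oneStar g (I \ B)| + (p * t + 2 * p * ε)) :=
            ENNReal.ofReal_le_ofReal habs
        _ = ENNReal.ofReal |oneStar g (I \ B)| + (ENNReal.ofReal (p * t)
              + ENNReal.ofReal (2 * p * ε)) := by
            rw [ENNReal.ofReal_add (abs_nonneg _) (by positivity),
              ENNReal.ofReal_add (by positivity) (by positivity)]
        _ ≤ BNorm g + (6 * rho g 0 + ENNReal.ofReal (2 * p * ε)) := by
            refine add_le_add ((ofReal_oneStar_le_beta g B a b).trans (beta_le_BNorm hBg)) ?_
            exact add_le_add_left h2 _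
        _ = 6 * rho g 0 + BNorm g + ENNReal.ofReal (2 * p * ε) := by ring
    · -- the level set is infinite, so rho g 0 = ⊤
      have hc : (0 : ℝ) < t + 2 * ε := by linarith
      have hD : ∀ m : ℕ, ENNReal.ofReal (t + 2 * ε) ≤ Drearr g m := by
        intro m
        refine le_sInf ?_
        rintro s ⟨hsf, -⟩
        by_contra hlt
        push_neg at hlt
        refine hfin (hsf.subset fun n hn => ?_)
        exact hlt.trans_le (ENNReal.ofReal_le_ofReal hn.le)
      have hmul : ∀ m : ℕ, (m : ℝ≥0∞) * ENNReal.ofReal (t + 2 * ε) ≤ rho g 0 := by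
        intro m
        rcases Nat.eq_zero_or_pos m with hm | hm
        · simp [hm]
        · exact (mul_le_mul_right (hD m) _).trans (mul_Drearr_le_rho hm)
      have htop : rho g 0 = ⊤ := by
        refine top_unique ?_
        calc (⊤ : ℝ≥0∞) = (⨆ m : ℕ, (m : ℝ≥0∞)) * ENNReal.ofReal (t + 2 * ε) := by
              rw [ENNReal.iSup_natCast, ENNReal.top_mul (by simp [ENNReal.ofReal_pos.2 hc, (ENNReal.ofReal_pos.2 hc).ne'])]
          _ = ⨆ m : ℕ, (m : ℝ≥0∞) * ENNReal.ofReal (t + 2 * ε) := ENNReal.iSup_mul _ _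
          _ ≤ rho g 0 := iSup_le hmul
      have : 6 * rho g 0 = ⊤ := by rw [htop]; exact ENNReal.mul_top (by norm_num)
      rw [this]
      simp

/-- if `f_j → f` pointwise, then
`‖f‖_𝔹 ≤ liminf_j (6·‖f_j‖_{1,∞} + ‖f_j‖_𝔹)` in `[0,∞]`. -/
theorem stmt_11 (f : ℕ → ℝ) (fj : ℕ → ℕ → ℝ)
    (h : ∀ n, Filter.Tendsto (fun j => fj j n) Filter.atTop (nhds (f n))) :
    BNorm f ≤ Filter.liminf (fun j => 6 * rho (fj j) 0 + BNorm (fj j)) Filter.atTop := by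
  set L := Filter.liminf (fun j => 6 * rho (fj j) 0 + BNorm (fj j)) Filter.atTop with hL
  rw [BNorm]
  refine iSup₂_le fun A hA => ?_
  rw [beta]
  refine iSup_le fun a => iSup_le fun b => ?_
  set I := Finset.Icc a b with hIdef
  set p := (A ∩ I).card with hpdef
  set X := ENNReal.ofReal |oneStar f (I \ A)| with hX
  have hA' : GreedySet f A := hA
  have main : ∀ ε : ℝ, 0 < ε → X ≤ L + ENNReal.ofReal ((2 * p + 1) * ε) := by
    intro ε hε
    have hsum : Tendsto (fun j => oneStar (fj j) (I \ A)) atTop (nhds (oneStar f (I \ A))) := by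
      unfold oneStar
      exact tendsto_finset_sum _ fun n _ => h n
    have h1 : ∀ᶠ j in atTop, |oneStar (fj j) (I \ A) - oneStar f (I \ A)| < ε := by
      have := Metric.tendsto_nhds.1 hsum ε hε
      simpa [Real.dist_eq] using this
    have h2 : ∀ᶠ j in atTop, ∀ n ∈ I, |fj j n - f n| < ε := by
      rw [Finset.eventually_all]
      intro n _
      have := Metric.tendsto_nhds.1 (h n) ε hε
      simpa [Real.dist_eq] using this
    have hev : ∀ᶠ j in atTop,
        X ≤ (6 * rho (fj j) 0 + BNorm (fj j)) + ENNReal.ofReal ((2 * p + 1) * ε) := by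
      filter_upwards [h1, h2] with j hj1 hj2
      have hAI : ∀ k ∈ Finset.Icc a b, k ∉ A → ∀ n ∈ A ∩ Finset.Icc a b,
          |fj j k| ≤ |fj j n| + 2 * ε := by
        intro k hkI hkA n hn
        rw [Finset.mem_inter] at hn
        have e1 : |fj j k - f k| < ε := hj2 k hkI
        have e2 : |fj j n - f n| < ε := hj2 n hn.2
        have e3 : |f k| ≤ |f n| := hA' n hn.1 k hkA
        have a1 : |fj j k| - |f k| ≤ |fj j k - f k| := abs_sub_abs_le_abs_sub _ _
        have a2 : |f n| - |fj j n| ≤ |f n - fj j n| := abs_sub_abs_le_abs_sub _ _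
        rw [abs_sub_comm] at a2
        linarith
      have hkey := key (fj j) A a b ε hε hAI
      have habs : |oneStar f (I \ A)| ≤ |oneStar (fj j) (I \ A)| + ε := by
        have := abs_sub_abs_le_abs_sub (oneStar f (I \ A)) (oneStar (fj j) (I \ A))
        rw [abs_sub_comm] at this
        linarith
      calc X ≤ ENNReal.ofReal (|oneStar (fj j) (I \ A)| + ε) := ENNReal.ofReal_le_ofReal habs
        _ = ENNReal.ofReal |oneStar (fj j) (I \ A)| + ENNReal.ofReal ε :=
            ENNReal.ofReal_add (abs_nonneg _) hε.le
        _ ≤ (6 * rho (fj j) 0 + BNorm (fj j) + ENNReal.ofReal (2 * p * ε))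
              + ENNReal.ofReal ε := add_le_add_left hkey _
        _ = (6 * rho (fj j) 0 + BNorm (fj j)) + ENNReal.ofReal ((2 * p + 1) * ε) := by
            rw [add_assoc, ← ENNReal.ofReal_add (by positivity) hε.le]
            ring_nf
    set c := ENNReal.ofReal ((2 * p + 1) * ε) with hcdef
    have hle : X - c ≤ L := by
      have h' : Filter.liminf (fun _ : ℕ => X - c) atTop ≤ L := by
        refine Filter.liminf_le_liminf ?_
        exact hev.mono fun j hj => tsub_le_iff_right.2 hj
      simpa [Filter.liminf_const] using h'
    calc X ≤ (X - c) + c := le_tsub_add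
      _ ≤ L + c := add_le_add_left hle _
  refine ENNReal.le_of_forall_pos_le_add fun δ hδ _ => ?_
  have hδ' : (0 : ℝ) < (δ : ℝ) := hδ
  have hden : (0 : ℝ) < 2 * (p : ℝ) + 1 := by positivity
  have := main ((δ : ℝ) / (2 * p + 1)) (by positivity)
  have heq : (2 * (p : ℝ) + 1) * ((δ : ℝ) / (2 * p + 1)) = (δ : ℝ) := by
    field_simp
  rw [heq, ENNReal.ofReal_coe_nnreal] at this
  exact this
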